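/- Suppose p ≠ q, let h(x) := q(x) − p(x), and let ≺ be any strict total order on T such that h(x) > h(x') implies x ≺ x' (and h(x) < h(x') implies x' ≺ x). Then for m = 1, the stochastic rank statistic satisfies P(R = 0) > 1/2; equivalently, P( (X₀,U₀) <_lex (X₁,U₁) ) > 1/2. -/

import Mathlib

open MeasureTheory ProbabilityTheory
open scoped ENNReal

noncomputable section

/-- The uniform distribution on the interval `[0,1]`. -/
def unifIcc : Measure ℝ := volume.restrict (Set.Icc 0 1)

/-- The setup of the stochastic rank statistic: on a common probability space `(Ω, μ)`,
`X 0` has distribution `q`, the `X i` for `i ≠ 0` have distribution `p`, the `U i` are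
uniform on `[0,1]`, and all of `X 0, …, X m, U 0, …, U m` are mutually independent.
(Mutual independence of the `2(m+1)` variables is recorded by independence of the pairs
`(X i, U i)` together with each pair having the product law.) -/
def IsRankSetup {T : Type} [MeasurableSpace T] {Ω : Type} [MeasurableSpace Ω]
    (μ : Measure Ω) (p q : Measure T) (m : ℕ)
    (X : Fin (m + 1) → Ω → T) (U : Fin (m + 1) → Ω → ℝ) : Prop :=
  (∀ i, Measurable (X i)) ∧ (∀ i, Measurable (U i)) ∧
  iIndepFun (fun i ω => (X i ω, U i ω)) μ ∧
  μ.map (fun ω => (X 0 ω, U 0 ω)) = q.prod unifIcc ∧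
  ∀ i : Fin (m + 1), i ≠ 0 → μ.map (fun ω => (X i ω, U i ω)) = p.prod unifIcc

open scoped Classical in
/-- The stochastic rank statistic
`R = ∑_{j=1}^m (1[X j ≺ X 0] + 1[X j = X 0 ∧ U j < U 0])`. -/
def rankStat {T : Type} {Ω : Type} (r : T → T → Prop) (m : ℕ)
    (X : Fin (m + 1) → Ω → T) (U : Fin (m + 1) → Ω → ℝ) (ω : Ω) : ℕ :=
  ∑ j : Fin m, ((if r (X j.succ ω) (X 0 ω) then 1 else 0) +
    (if X j.succ ω = X 0 ω ∧ U j.succ ω < U 0 ω then 1 else 0))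

open scoped Classical

section Core

variable {T : Type} [Countable T]

lemma ind_nonneg {P : T → ℝ} (hP0 : ∀ x, 0 ≤ P x) (c : T → Prop) (b : T) :
    0 ≤ (if c b then P b else 0) := by split <;> simp [hP0 _]

lemma core_ineq (P Q : T → ℝ) (r : T → T → Prop)
    (hP0 : ∀ x, 0 ≤ P x) (hQ0 : ∀ x, 0 ≤ Q x)
    (hPs : Summable P) (hQs : Summable Q)
    (hP1 : ∑' x, P x = 1) (hQ1 : ∑' x, Q x = 1)
    (hne : P ≠ Q)
    (hirr : ∀ a, ¬ r a a)
    (htrans : ∀ a b c, r a b → r b c → r a c)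
    (htri : ∀ a b, a ≠ b → r a b ∨ r b a)
    (hord : ∀ a b, Q a - P a > Q b - P b → r a b) :
    1/2 < ∑' a, Q a * ((∑' b, if r a b then P b else 0) + P a / 2) := by
  -- basic summability of indicator-restricted sums
  have hsum_ind : ∀ (c : T → Prop), Summable (fun b => if c b then P b else 0) := by
    intro c
    refine Summable.of_nonneg_of_le (ind_nonneg hP0 c) (fun b => ?_) hPs
    split <;> simp [hP0 _]
  set L : T → ℝ := fun a => ∑' b, if r a b then P b else 0 with hL
  set M : T → ℝ := fun a => ∑' b, if r b a then P b else 0 with hM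
  have hL0 : ∀ a, 0 ≤ L a := fun a => tsum_nonneg (ind_nonneg hP0 _)
  have hM0 : ∀ a, 0 ≤ M a := fun a => tsum_nonneg (ind_nonneg hP0 _)
  have hL1 : ∀ a, L a ≤ 1 := by
    intro a; rw [← hP1]
    exact Summable.tsum_le_tsum (fun b => by split <;> simp [hP0 _]) (hsum_ind _) hPs
  have hM1 : ∀ a, M a ≤ 1 := by
    intro a; rw [← hP1]
    exact Summable.tsum_le_tsum (fun b => by split <;> simp [hP0 _]) (hsum_ind _) hPs
  have hPle1 : ∀ a, P a ≤ 1 := by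
    intro a; rw [← hP1]; exact Summable.le_tsum hPs a (fun b _ => hP0 b)
  -- partition: L a + M a + P a = 1
  have hpart : ∀ a, L a + M a + P a = 1 := by
    intro a
    have h1 : ∀ b, (if r a b then P b else 0) + (if r b a then P b else 0)
        + (if b = a then P b else 0) = P b := by
      intro b
      rcases eq_or_ne b a with rfl | hb
      · simp [hirr b]
      · rcases htri a b (Ne.symm hb) with h | h
        · have : ¬ r b a := fun h' => hirr a (htrans a b a h h')
          simp [h, this, hb]
        · have : ¬ r a b := fun h' => hirr a (htrans a b a h' h)
          simp [h, this, hb]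
    have hPa : ∑' b, (if b = a then P b else 0) = P a := by
      rw [tsum_eq_single a (by intro b hb; simp [hb])]; simp
    calc L a + M a + P a
        = ∑' b, ((if r a b then P b else 0) + (if r b a then P b else 0)
            + (if b = a then P b else 0)) := by
          rw [hL, hM, ← hPa, ← Summable.tsum_add (hsum_ind _) (hsum_ind _),
            ← Summable.tsum_add ((hsum_ind (fun b => r a b)).add (hsum_ind (fun b => r b a)))
              (hsum_ind (fun b => b = a))]
      _ = ∑' b, P b := tsum_congr h1
      _ = 1 := hP1
  -- bounded products are summable
  have hmulsum : ∀ (f g : T → ℝ), Summable f → (∀ x, 0 ≤ f x) → (∀ x, 0 ≤ g x) →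
      (∀ x, g x ≤ 1) → Summable (fun a => f a * g a) := by
    intro f g hf hf0 hg0 hg1
    refine Summable.of_nonneg_of_le (fun a => mul_nonneg (hf0 a) (hg0 a)) (fun a => ?_) hf
    calc f a * g a ≤ f a * 1 := mul_le_mul_of_nonneg_left (hg1 a) (hf0 a)
      _ = f a := mul_one _
  have hQL : Summable (fun a => Q a * L a) := hmulsum Q L hQs hQ0 hL0 hL1
  have hQM : Summable (fun a => Q a * M a) := hmulsum Q M hQs hQ0 hM0 hM1
  have hQP : Summable (fun a => Q a * P a) := hmulsum Q P hQs hQ0 hP0 hPle1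
  have hPL : Summable (fun a => P a * L a) := hmulsum P L hPs hP0 hL0 hL1
  have hPM : Summable (fun a => P a * M a) := hmulsum P M hPs hP0 hM0 hM1
  -- Fubini: ∑ P L = ∑ P M
  have hswap : ∑' a, P a * L a = ∑' a, P a * M a := by
    have hFs : Summable (fun z : T × T => if r z.1 z.2 then P z.1 * P z.2 else 0) := by
      refine Summable.of_nonneg_of_le (fun z => ?_) (fun z => ?_)
        (hPs.mul_of_nonneg hPs hP0 hP0)
      · split <;> simp [mul_nonneg (hP0 _) (hP0 _)]
      · split <;> simp [mul_nonneg (hP0 _) (hP0 _)]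
    have hGs : Summable (fun z : T × T => if r z.2 z.1 then P z.1 * P z.2 else 0) := by
      refine Summable.of_nonneg_of_le (fun z => ?_) (fun z => ?_)
        (hPs.mul_of_nonneg hPs hP0 hP0)
      · split <;> simp [mul_nonneg (hP0 _) (hP0 _)]
      · split <;> simp [mul_nonneg (hP0 _) (hP0 _)]
    have h1 : ∀ a, P a * L a = ∑' b, (if r a b then P a * P b else 0) := by
      intro a
      rw [hL]
      simp only [← tsum_mul_left]
      congr 1; funext b; split <;> simp
    have h2 : ∀ a, P a * M a = ∑' b, (if r b a then P a * P b else 0) := by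
      intro a
      rw [hM]
      simp only [← tsum_mul_left]
      congr 1; funext b; split <;> simp
    calc ∑' a, P a * L a = ∑' a, ∑' b, (if r a b then P a * P b else 0) := tsum_congr h1
      _ = ∑' z : T × T, (if r z.1 z.2 then P z.1 * P z.2 else 0) := (Summable.tsum_prod hFs).symm
      _ = ∑' z : T × T, (if r z.2 z.1 then P z.1 * P z.2 else 0) := by
          rw [← (Equiv.prodComm T T).tsum_eq
            (fun z : T × T => if r z.2 z.1 then P z.1 * P z.2 else 0)]
          exact tsum_congr (fun z => by simp [Equiv.prodComm, mul_comm])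
      _ = ∑' a, ∑' b, (if r b a then P a * P b else 0) := Summable.tsum_prod hGs
      _ = ∑' a, P a * M a := (tsum_congr h2).symm
  -- total mass identity
  have htotal : ∑' a, Q a * L a + ∑' a, Q a * M a + ∑' a, Q a * P a = 1 := by
    rw [← Summable.tsum_add hQL hQM, ← Summable.tsum_add (hQL.add hQM) hQP]
    calc ∑' a, (Q a * L a + Q a * M a + Q a * P a) = ∑' a, Q a := by
          refine tsum_congr (fun a => ?_)
          rw [← mul_add, ← mul_add, hpart a, mul_one]
      _ = 1 := hQ1
  -- the signed difference h and a negative point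
  set h : T → ℝ := fun x => Q x - P x with hh
  have hhs : Summable h := hQs.sub hPs
  have hh0 : ∑' x, h x = 0 := by rw [hh]; rw [Summable.tsum_sub hQs hPs, hP1, hQ1]; ring
  have hgabs : ∀ x, |L x - M x| ≤ 1 := fun x =>
    abs_le.2 ⟨by linarith [hL0 x, hM1 x], by linarith [hL1 x, hM0 x]⟩
  have hhg : Summable (fun x => h x * (L x - M x)) := by
    refine Summable.of_norm_bounded hhs.abs (fun x => ?_)
    rw [Real.norm_eq_abs, abs_mul]
    calc |h x| * |L x - M x| ≤ |h x| * 1 :=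
          mul_le_mul_of_nonneg_left (hgabs x) (abs_nonneg _)
      _ = |h x| := mul_one _
  have hhP : Summable (fun x => |h x| * P x) := by
    refine Summable.of_nonneg_of_le (fun x => mul_nonneg (abs_nonneg _) (hP0 x))
      (fun x => ?_) hhs.abs
    calc |h x| * P x ≤ |h x| * 1 := mul_le_mul_of_nonneg_left (hPle1 x) (abs_nonneg _)
      _ = |h x| := mul_one _
  have hexneg : ∃ b, h b < 0 := by
    by_contra hcon
    push_neg at hcon
    have hex : ∃ a, h a ≠ 0 := by
      by_contra hc; push_neg at hc
      exact hne (funext fun x => by have := hc x; rw [hh] at this; simp at this; linarith)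
    obtain ⟨a, ha⟩ := hex
    have h1 : h a ≤ ∑' x, h x := Summable.le_tsum hhs a (fun b _ => hcon b)
    have h2 : 0 < h a := lt_of_le_of_ne (hcon a) (Ne.symm ha)
    rw [hh0] at h1; linarith
  obtain ⟨b0, hb0⟩ := hexneg
  have hPb0 : 0 < P b0 := by
    have h1 : Q b0 - P b0 < 0 := hb0
    have := hQ0 b0; linarith
  -- the threshold constant
  set S : Set ℝ := (fun x => (L x - M x) + P x) '' {x | h x < 0} with hS
  have hSne : S.Nonempty := ⟨_, ⟨b0, hb0, rfl⟩⟩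
  have hSbdd : BddAbove S := by
    refine ⟨2, ?_⟩
    rintro _ ⟨x, -, rfl⟩
    have := hL1 x; have := hM0 x; have := hPle1 x
    simp only []; linarith
  set c : ℝ := sSup S with hc
  -- monotonicity of L - M along r
  have hmono : ∀ a b, r a b → (L b - M b) + P a + P b ≤ L a - M a := by
    intro a b hab
    have hLab : L b + P b ≤ L a := by
      have : L b + P b = ∑' y, ((if r b y then P y else 0) + (if y = b then P y else 0)) := by
        rw [Summable.tsum_add (hsum_ind _) (hsum_ind _), hL]
        congr 1
        rw [tsum_eq_single b (by intro y hy; simp [hy])]; simp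
      rw [this, hL]
      refine Summable.tsum_le_tsum (fun y => ?_) ((hsum_ind _).add (hsum_ind _)) (hsum_ind _)
      rcases eq_or_ne y b with rfl | hy
      · simp [hirr y, hab]
      · by_cases hby : r b y
        · simp [hby, hy, htrans a b y hab hby]
        · simp only [hby, if_false, hy, if_false, add_zero, zero_add]
          split <;> simp [hP0 _]
    have hMab : M a + P a ≤ M b := by
      have : M a + P a = ∑' y, ((if r y a then P y else 0) + (if y = a then P y else 0)) := by
        rw [Summable.tsum_add (hsum_ind _) (hsum_ind _), hM]
        congr 1
        rw [tsum_eq_single a (by intro y hy; simp [hy])]; simp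
      rw [this, hM]
      refine Summable.tsum_le_tsum (fun y => ?_) ((hsum_ind _).add (hsum_ind _)) (hsum_ind _)
      rcases eq_or_ne y a with rfl | hy
      · simp [hirr y, hab]
      · by_cases hya : r y a
        · simp [hya, hy, htrans y a b hya hab]
        · simp only [hya, if_false, hy, if_false, add_zero, zero_add]
          split <;> simp [hP0 _]
    linarith
  -- pointwise lower bound
  have hpt : ∀ x, h x * c + |h x| * P x ≤ h x * (L x - M x) := by
    intro x
    rcases lt_trichotomy (h x) 0 with hx | hx | hx
    · have hmem : (L x - M x) + P x ≤ c := le_csSup hSbdd ⟨x, hx, rfl⟩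
      rw [abs_of_neg hx]
      nlinarith
    · simp [hx]
    · have hub : c ≤ (L x - M x) - P x := by
        refine csSup_le hSne ?_
        rintro _ ⟨y, hy, rfl⟩
        have hx' : 0 < Q x - P x := hx
        have hy' : Q y - P y < 0 := hy
        have hrxy : r x y := hord x y (by linarith)
        have := hmono x y hrxy
        simp only []; linarith
      rw [abs_of_pos hx]
      nlinarith
  -- sum up
  have hD : 0 < ∑' x, h x * (L x - M x) := by
    have hlhs_sum : Summable (fun x => h x * c + |h x| * P x) :=
      (hhs.mul_right c).add hhP
    have h1 : ∑' x, (h x * c + |h x| * P x) ≤ ∑' x, h x * (L x - M x) :=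
      Summable.tsum_le_tsum hpt hlhs_sum hhg
    have h2 : ∑' x, (h x * c + |h x| * P x) = ∑' x, |h x| * P x := by
      rw [Summable.tsum_add (hhs.mul_right c) hhP, tsum_mul_right, hh0, zero_mul, zero_add]
    have h3 : |h b0| * P b0 ≤ ∑' x, |h x| * P x :=
      Summable.le_tsum hhP b0 (fun j _ => mul_nonneg (abs_nonneg _) (hP0 j))
    have h4 : 0 < |h b0| * P b0 := mul_pos (abs_pos.2 (ne_of_lt hb0)) hPb0
    linarith
  -- expand D = A - B
  have hexp : ∑' x, h x * (L x - M x)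
      = ∑' a, Q a * L a - ∑' a, Q a * M a - ∑' a, P a * L a + ∑' a, P a * M a := by
    have e1 : ∀ x, h x * (L x - M x)
        = (Q x * L x - Q x * M x) - (P x * L x - P x * M x) := by
      intro x; rw [hh]; ring
    rw [tsum_congr e1, Summable.tsum_sub (hQL.sub hQM) (hPL.sub hPM), Summable.tsum_sub hQL hQM,
      Summable.tsum_sub hPL hPM]
    ring
  have hAB : ∑' a, Q a * M a < ∑' a, Q a * L a := by
    rw [hexp, hswap] at hD; linarith
  -- conclude
  have hgoal : ∑' a, Q a * (L a + P a / 2)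
      = ∑' a, Q a * L a + (∑' a, Q a * P a) / 2 := by
    have e : ∀ a, Q a * (L a + P a / 2) = Q a * L a + (Q a * P a) / 2 := by
      intro a; ring
    have hs2 : Summable (fun a => Q a * P a / 2) := hQP.div_const 2
    rw [tsum_congr e, Summable.tsum_add hQL hs2, tsum_div_const]
  rw [hgoal]
  linarith


end Core



instance : IsProbabilityMeasure unifIcc :=
  ⟨by simp [unifIcc, Real.volume_Icc]⟩

lemma unifIcc_nlt (u : ℝ) (hu : u ∈ Set.Icc (0:ℝ) 1) :
    unifIcc {v | ¬ v < u} = ENNReal.ofReal (1 - u) := by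
  have h1 : {v : ℝ | ¬ v < u} = Set.Ici u := by ext v; simp [Set.mem_Ici, not_lt]
  rw [h1, unifIcc, Measure.restrict_apply measurableSet_Ici]
  have h2 : Set.Ici u ∩ Set.Icc 0 1 = Set.Icc u 1 := by
    ext v
    simp only [Set.mem_inter_iff, Set.mem_Ici, Set.mem_Icc]
    constructor
    · rintro ⟨h, _, h2⟩; exact ⟨h, h2⟩
    · rintro ⟨h, h2⟩; exact ⟨h, le_trans hu.1 h, h2⟩
  rw [h2, Real.volume_Icc]

lemma unifIcc_half : ∫⁻ u, unifIcc {v | ¬ v < u} ∂unifIcc = 2⁻¹ := by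
  have hcongr : ∫⁻ u, unifIcc {v | ¬ v < u} ∂unifIcc
      = ∫⁻ u in Set.Icc (0:ℝ) 1, ENNReal.ofReal (1 - u) ∂volume := by
    rw [unifIcc]
    exact setLIntegral_congr_fun measurableSet_Icc
      (fun u hu => unifIcc_nlt u hu)
  rw [hcongr]
  have hInt : IntegrableOn (fun u : ℝ => 1 - u) (Set.Icc 0 1) volume :=
    (continuous_const.sub continuous_id).integrableOn_Icc
  have hpos : 0 ≤ᶠ[ae (volume.restrict (Set.Icc (0:ℝ) 1))] (fun u : ℝ => 1 - u) := by
    refine (ae_restrict_iff' measurableSet_Icc).2 (ae_of_all _ fun u hu => ?_)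
    simp only [Pi.zero_apply]
    linarith [hu.2]
  rw [← ofReal_integral_eq_lintegral_ofReal hInt hpos]
  have hval : ∫ u in Set.Icc (0:ℝ) 1, (1 - u) = 1/2 := by
    rw [MeasureTheory.integral_Icc_eq_integral_Ioc,
      ← intervalIntegral.integral_of_le (zero_le_one)]
    simp [intervalIntegral.integral_sub intervalIntegrable_const
      intervalIntegral.intervalIntegrable_id, integral_id]
    norm_num
  rw [hval]
  rw [show (1:ℝ)/2 = (2:ℝ)⁻¹ by norm_num,
    ENNReal.ofReal_inv_of_pos (by norm_num : (0:ℝ) < 2)]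
  norm_num

section Meas
variable {T : Type} [Countable T] [MeasurableSpace T] [MeasurableSingletonClass T]

lemma unif_nlt_measurable : Measurable (fun u : ℝ => unifIcc {v | ¬ v < u}) := by
  have hanti : Antitone (fun u : ℝ => unifIcc {v | ¬ v < u}) := by
    intro u1 u2 h12
    refine measure_mono fun v hv => ?_
    simp only [Set.mem_setOf_eq, not_lt] at hv ⊢
    linarith
  exact hanti.measurable

lemma meas_all (s : Set T) : MeasurableSet s := (Set.to_countable s).measurableSet

lemma srs_S_measurable (r : T → T → Prop) :
    MeasurableSet {z : (T×ℝ)×(T×ℝ) | ¬ r z.2.1 z.1.1 ∧ ¬(z.2.1 = z.1.1 ∧ z.2.2 < z.1.2)} := by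
  have hproj : Measurable (fun z : (T×ℝ)×(T×ℝ) => (z.2.1, z.1.1)) :=
    (measurable_snd.fst).prodMk (measurable_fst.fst)
  have h1 : MeasurableSet {z : (T×ℝ)×(T×ℝ) | r z.2.1 z.1.1} :=
    hproj (meas_all {w : T × T | r w.1 w.2})
  have h2 : MeasurableSet {z : (T×ℝ)×(T×ℝ) | z.2.1 = z.1.1} :=
    hproj (meas_all {w : T × T | w.1 = w.2})
  have h3 : MeasurableSet {z : (T×ℝ)×(T×ℝ) | z.2.2 < z.1.2} :=
    measurableSet_lt (measurable_snd.snd) (measurable_fst.snd)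
  have hset : {z : (T×ℝ)×(T×ℝ) | ¬ r z.2.1 z.1.1 ∧ ¬(z.2.1 = z.1.1 ∧ z.2.2 < z.1.2)}
      = {z : (T×ℝ)×(T×ℝ) | r z.2.1 z.1.1}ᶜ ∩
      ({z : (T×ℝ)×(T×ℝ) | z.2.1 = z.1.1} ∩ {z : (T×ℝ)×(T×ℝ) | z.2.2 < z.1.2})ᶜ := by
    ext z
    simp only [Set.mem_setOf_eq, Set.mem_inter_iff, Set.mem_compl_iff,
      Set.mem_setOf_eq, not_and]
  rw [hset]
  exact h1.compl.inter (h2.inter h3).compl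

lemma srs_measure_eq (p q : PMF T) (r : T → T → Prop)
    (hirr : ∀ a, ¬ r a a)
    (htrans : ∀ a b c, r a b → r b c → r a c)
    (htri : ∀ a b, a ≠ b → r a b ∨ r b a) :
    ((q.toMeasure.prod unifIcc).prod (p.toMeasure.prod unifIcc))
      {z : (T×ℝ)×(T×ℝ) | ¬ r z.2.1 z.1.1 ∧ ¬(z.2.1 = z.1.1 ∧ z.2.2 < z.1.2)} =
    ∑' a, ((∑' b, if r a b then p b else 0) + p a * 2⁻¹) * q a := by
  set S : Set ((T×ℝ)×(T×ℝ)) :=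
    {z | ¬ r z.2.1 z.1.1 ∧ ¬(z.2.1 = z.1.1 ∧ z.2.2 < z.1.2)} with hSdef
  have hS : MeasurableSet S := srs_S_measurable r
  -- measurability of slice weights in u
  have hwu : ∀ b a : T, Measurable (fun u : ℝ =>
      (if r b a then 0 else if b = a then unifIcc {v | ¬ v < u} else 1) * p b) := by
    intro b a
    by_cases hba : r b a
    · simp only [hba, if_true]; exact measurable_const
    · by_cases hbe : b = a
      · subst hbe
        simp only [if_neg (hirr b), if_pos rfl]
        exact unif_nlt_measurable.mul measurable_const
      · simp only [hba, hbe, if_false]; exact measurable_const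
  -- the inner slice measure
  have hasym : ∀ a b, r b a → ¬ r a b := fun a b hba hab => hirr a (htrans a b a hab hba)
  have hslice : ∀ (a : T) (u : ℝ),
      (p.toMeasure.prod unifIcc) (Prod.mk (a, u) ⁻¹' S)
        = ∑' b, (if r b a then 0 else if b = a then unifIcc {v | ¬ v < u} else 1) * p b := by
    intro a u
    have hpre : MeasurableSet (Prod.mk ((a : T), (u : ℝ)) ⁻¹' S) := hS.preimage (measurable_prodMk_left)
    rw [Measure.prod_apply hpre, lintegral_countable']
    refine tsum_congr fun b => ?_
    rw [PMF.toMeasure_apply_singleton _ _ (measurableSet_singleton b)]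
    congr 1
    have hslice_eq : Prod.mk b ⁻¹' (Prod.mk ((a : T), (u : ℝ)) ⁻¹' S)
        = {v : ℝ | ¬ r b a ∧ ¬ (b = a ∧ v < u)} := by
      ext v; simp [hSdef]
    rw [hslice_eq]
    by_cases hba : r b a
    · have : {v : ℝ | ¬ r b a ∧ ¬ (b = a ∧ v < u)} = ∅ := by
        ext v; simp [hba]
      simp [this, hba]
    · by_cases hbe : b = a
      · subst hbe
        have : {v : ℝ | ¬ r b b ∧ ¬ (b = b ∧ v < u)} = {v | ¬ v < u} := by
          ext v; simp [hirr b]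
        rw [this, if_neg hba, if_pos rfl]
      · have : {v : ℝ | ¬ r b a ∧ ¬ (b = a ∧ v < u)} = Set.univ := by
          ext v; simp [hba, hbe]
        simp [this, hba, hbe]
  -- measurability of the inner integrand
  have hwmeas : ∀ b : T, Measurable (fun x : T × ℝ =>
      (if r b x.1 then 0 else if b = x.1 then unifIcc {v | ¬ v < x.2} else 1) * p b) := by
    intro b
    refine Measurable.mul ?_ measurable_const
    have heq : (fun x : T × ℝ => (if r b x.1 then 0 else if b = x.1 then
        unifIcc {v | ¬ v < x.2} else 1)) = (fun y : ℝ × T => (if r b y.2 then 0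
          else if b = y.2 then unifIcc {v | ¬ v < y.1} else 1)) ∘ Prod.swap := by
      funext x; rfl
    rw [heq]
    refine Measurable.comp ?_ measurable_swap
    refine measurable_from_prod_countable_left fun a => ?_
    by_cases hba : r b a
    · simp only [hba, if_true]; exact measurable_const
    · by_cases hbe : b = a
      · subst hbe
        simp only [if_neg (hirr b), if_pos rfl]
        exact unif_nlt_measurable
      · simp only [hba, hbe, if_false]; exact measurable_const
  have hfmeas : Measurable (fun x : T × ℝ => ∑' b,
      (if r b x.1 then 0 else if b = x.1 then unifIcc {v | ¬ v < x.2} else 1) * p b) :=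
    Measurable.ennreal_tsum hwmeas
  -- main computation
  rw [Measure.prod_apply hS]
  have houter : ∫⁻ x, (p.toMeasure.prod unifIcc) (Prod.mk x ⁻¹' S)
        ∂(q.toMeasure.prod unifIcc)
      = ∫⁻ x : T × ℝ, (∑' b, (if r b x.1 then 0 else if b = x.1 then
          unifIcc {v | ¬ v < x.2} else 1) * p b) ∂(q.toMeasure.prod unifIcc) := by
    refine lintegral_congr fun x => ?_
    obtain ⟨a, u⟩ := x
    exact hslice a u
  rw [houter, lintegral_prod _ hfmeas.aemeasurable]
  -- inner u-integral
  have hinner : ∀ a : T, ∫⁻ u, (∑' b, (if r b a then 0 else if b = a then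
      unifIcc {v | ¬ v < u} else 1) * p b) ∂unifIcc
      = (∑' b, if r a b then p b else 0) + p a * 2⁻¹ := by
    intro a
    rw [lintegral_tsum (fun b => (hwu b a).aemeasurable)]
    have hterm : ∀ b : T, ∫⁻ u, (if r b a then 0 else if b = a then
        unifIcc {v | ¬ v < u} else 1) * p b ∂unifIcc
        = (if r a b then p b else 0) + (if b = a then p b * 2⁻¹ else 0) := by
      intro b
      by_cases hba : r b a
      · have hnab : ¬ r a b := hasym a b hba
        have hne : b ≠ a := fun h => hirr a (h ▸ hba)
        simp [hba, hnab, hne]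
      · by_cases hbe : b = a
        · subst hbe
          have hnr : ¬ r b b := hirr b
          have heq2 : (fun u : ℝ => (if r b b then 0 else if b = b then
              unifIcc {v | ¬ v < u} else 1) * p b)
              = fun u : ℝ => unifIcc {v | ¬ v < u} * p b := by
            funext u; simp [hnr]
          rw [heq2, lintegral_mul_const _ unif_nlt_measurable, unifIcc_half]
          simp [hnr, mul_comm]
        · have hab : r a b := (htri a b (Ne.symm hbe)).resolve_right hba
          simp only [hba, hbe, if_false, if_true, hab]
          rw [lintegral_const, one_mul]
          simp [hab, hbe]
    rw [tsum_congr hterm, ENNReal.tsum_add]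
    congr 1
    rw [tsum_eq_single a (by intro b hb; simp [hb])]
    simp
  have : ∫⁻ a : T, (∫⁻ u, (∑' b, (if r b a then 0 else if b = a then
        unifIcc {v | ¬ v < u} else 1) * p b) ∂unifIcc) ∂q.toMeasure
      = ∫⁻ a : T, ((∑' b, if r a b then p b else 0) + p a * 2⁻¹) ∂q.toMeasure :=
    lintegral_congr fun a => hinner a
  rw [this, lintegral_countable']
  exact tsum_congr fun a => by
    rw [PMF.toMeasure_apply_singleton _ _ (measurableSet_singleton a)]

lemma srs_bridge (p q : PMF T) (hpq : p ≠ q) (r : T → T → Prop)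
    (hirr : ∀ a, ¬ r a a)
    (htrans : ∀ a b c, r a b → r b c → r a c)
    (htri : ∀ a b, a ≠ b → r a b ∨ r b a)
    (hord : ∀ x x' : T,
      (q x).toReal - (p x).toReal > (q x').toReal - (p x').toReal → r x x') :
    (2⁻¹ : ℝ≥0∞) < ∑' a, ((∑' b, if r a b then p b else 0) + p a * 2⁻¹) * q a := by
  set P : T → ℝ := fun x => (p x).toReal with hPdef
  set Q : T → ℝ := fun x => (q x).toReal with hQdef
  have hP0 : ∀ x, 0 ≤ P x := fun x => ENNReal.toReal_nonneg
  have hQ0 : ∀ x, 0 ≤ Q x := fun x => ENNReal.toReal_nonneg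
  have hPs : Summable P := ENNReal.summable_toReal (by rw [p.tsum_coe]; exact ENNReal.one_ne_top)
  have hQs : Summable Q := ENNReal.summable_toReal (by rw [q.tsum_coe]; exact ENNReal.one_ne_top)
  have hP1 : ∑' x, P x = 1 := by
    have := ENNReal.tsum_toReal_eq (fun a => p.apply_ne_top a)
    rw [p.tsum_coe] at this
    simpa using this.symm
  have hQ1 : ∑' x, Q x = 1 := by
    have := ENNReal.tsum_toReal_eq (fun a => q.apply_ne_top a)
    rw [q.tsum_coe] at this
    simpa using this.symm
  have hne : P ≠ Q := by
    intro h
    refine hpq (PMF.ext fun x => ?_)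
    have := congrFun h x
    exact (ENNReal.toReal_eq_toReal_iff' (p.apply_ne_top x) (q.apply_ne_top x)).mp this
  have hcore := core_ineq P Q r hP0 hQ0 hPs hQs hP1 hQ1 hne hirr htrans htri hord
  -- finiteness of the ENNReal sum
  have hLle : ∀ a, (∑' b, if r a b then p b else 0) ≤ 1 := by
    intro a
    rw [← p.tsum_coe]
    exact ENNReal.tsum_le_tsum fun b => by split <;> simp
  have hterm_ne : ∀ a, ((∑' b, if r a b then p b else 0) + p a * 2⁻¹) * q a ≠ ⊤ := by
    intro a
    refine ENNReal.mul_ne_top (ENNReal.add_ne_top.2 ⟨?_, ?_⟩) (q.apply_ne_top a)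
    · exact ne_top_of_le_ne_top ENNReal.one_ne_top (hLle a)
    · exact ENNReal.mul_ne_top (p.apply_ne_top a) (by simp)
  have hZ_ne : (∑' a, ((∑' b, if r a b then p b else 0) + p a * 2⁻¹) * q a) ≠ ⊤ := by
    refine ne_top_of_le_ne_top (show (2 : ℝ≥0∞) ≠ ⊤ by simp) ?_
    calc ∑' a, ((∑' b, if r a b then p b else 0) + p a * 2⁻¹) * q a
          ≤ ∑' a, 2 * q a := by
            refine ENNReal.tsum_le_tsum fun a => ?_
            refine mul_le_mul_left ?_ _
            calc (∑' b, if r a b then p b else 0) + p a * 2⁻¹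
                ≤ 1 + 1 := by
                  refine add_le_add (hLle a) ?_
                  calc p a * 2⁻¹ ≤ 1 * 1 :=
                        mul_le_mul' (PMF.coe_le_one p a) (by norm_num)
                    _ = 1 := one_mul 1
              _ = 2 := one_add_one_eq_two
        _ = 2 := by rw [ENNReal.tsum_mul_left, q.tsum_coe, mul_one]
  -- toReal computation
  have hL_toReal : ∀ a, (∑' b, if r a b then (p b : ℝ≥0∞) else 0).toReal
      = ∑' b, (if r a b then P b else 0) := by
    intro a
    rw [ENNReal.tsum_toReal_eq (fun b => by split <;> simp [p.apply_ne_top])]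
    exact tsum_congr fun b => by split <;> simp [hPdef]
  have hZ_toReal : (∑' a, ((∑' b, if r a b then p b else 0) + p a * 2⁻¹) * q a).toReal
      = ∑' a, Q a * ((∑' b, if r a b then P b else 0) + P a / 2) := by
    rw [ENNReal.tsum_toReal_eq hterm_ne]
    refine tsum_congr fun a => ?_
    rw [ENNReal.toReal_mul, ENNReal.toReal_add
      (ne_top_of_le_ne_top ENNReal.one_ne_top (hLle a))
      (ENNReal.mul_ne_top (p.apply_ne_top a) (by simp)),
      ENNReal.toReal_mul, hL_toReal a]
    have h2 : ((2 : ℝ≥0∞)⁻¹).toReal = (2 : ℝ)⁻¹ := by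
      rw [ENNReal.toReal_inv]; norm_num
    rw [h2]
    ring
  have hlt : ((2 : ℝ≥0∞)⁻¹).toReal
      < (∑' a, ((∑' b, if r a b then p b else 0) + p a * 2⁻¹) * q a).toReal := by
    rw [hZ_toReal]
    have h2 : ((2 : ℝ≥0∞)⁻¹).toReal = 1 / 2 := by
      rw [ENNReal.toReal_inv]; norm_num
    rw [h2]
    exact hcore
  exact (ENNReal.toReal_lt_toReal (by simp) hZ_ne).mp hlt

end Meas

/-- **Theorem (an ordering that witnesses `p ≠ q` for `m = 1`).** Suppose `p ≠ q`, let
`h x := q x - p x`, and let `≺` be any strict total order on `T` such that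
`h x > h x'` implies `x ≺ x'` (and `h x < h x'` implies `x' ≺ x`).  Then for `m = 1` the
stochastic rank statistic satisfies `P(R = 0) > 1/2`. -/
theorem srs_prob_rank_zero_gt_half
    {T : Type} [Countable T] [Nonempty T] [MeasurableSpace T] [MeasurableSingletonClass T]
    (p q : PMF T) (hpq : p ≠ q)
    (r : T → T → Prop) (hr : IsStrictTotalOrder T r)
    (horder₁ : ∀ x x' : T,
      (q x).toReal - (p x).toReal > (q x').toReal - (p x').toReal → r x x')
    (horder₂ : ∀ x x' : T,
      (q x).toReal - (p x).toReal < (q x').toReal - (p x').toReal → r x' x) :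
    ∀ (Ω : Type) (_ : MeasurableSpace Ω) (μ : Measure Ω), IsProbabilityMeasure μ →
      ∀ (X : Fin (1 + 1) → Ω → T) (U : Fin (1 + 1) → Ω → ℝ),
        IsRankSetup μ p.toMeasure q.toMeasure 1 X U →
        2⁻¹ < μ {ω | rankStat r 1 X U ω = 0} := by
  intro Ω mΩ μ hμ X U hsetup
  obtain ⟨hXm, hUm, hind, h0, hi⟩ := hsetup
  have hirr : ∀ a, ¬ r a a := fun a ha => (haveI := hr; irrefl a ha)
  have htrans : ∀ a b c, r a b → r b c → r a c := fun a b c =>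
    hr.toIsStrictOrder.toIsTrans.trans a b c
  have htri : ∀ a b : T, a ≠ b → r a b ∨ r b a := by
    intro a b hab
    rcases (haveI := hr; trichotomous_of r a b) with h | h | h
    · exact Or.inl h
    · exact absurd h hab
    · exact Or.inr h
  have hV0m : Measurable (fun ω => (X 0 ω, U 0 ω)) := (hXm 0).prodMk (hUm 0)
  have hV1m : Measurable (fun ω => (X 1 ω, U 1 ω)) := (hXm 1).prodMk (hUm 1)
  have h1 : μ.map (fun ω => (X 1 ω, U 1 ω)) = p.toMeasure.prod unifIcc := hi 1 (by decide)
  have hindep : IndepFun (fun ω => (X 0 ω, U 0 ω)) (fun ω => (X 1 ω, U 1 ω)) μ :=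
    hind.indepFun (show (0 : Fin (1+1)) ≠ 1 by decide)
  have hjoint : μ.map (fun ω => ((X 0 ω, U 0 ω), (X 1 ω, U 1 ω)))
      = (q.toMeasure.prod unifIcc).prod (p.toMeasure.prod unifIcc) := by
    rw [(indepFun_iff_map_prod_eq_prod_map_map hV0m.aemeasurable hV1m.aemeasurable).mp hindep,
      h0, h1]
  have hE : {ω | rankStat r 1 X U ω = 0}
      = (fun ω => ((X 0 ω, U 0 ω), (X 1 ω, U 1 ω))) ⁻¹'
        {z : (T×ℝ)×(T×ℝ) | ¬ r z.2.1 z.1.1 ∧ ¬(z.2.1 = z.1.1 ∧ z.2.2 < z.1.2)} := by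
    ext ω
    simp only [Set.mem_setOf_eq, Set.mem_preimage, rankStat, Fin.sum_univ_one,
      Fin.succ_zero_eq_one, Nat.add_eq_zero, ite_eq_right_iff, one_ne_zero, imp_false]
  rw [hE, ← Measure.map_apply (hV0m.prodMk hV1m) (srs_S_measurable r), hjoint,
    srs_measure_eq p q r hirr htrans htri]
  exact srs_bridge p q hpq r hirr htrans htri horder₁


end
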